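/- arXiv:1904.10802 — 3 statements merged into one kernel-verified Lean document; each statement's English description precedes it below -/
import Mathlib

section
/- For all g ≥ 2, ∑_{i=0}^{g} C(g,i)·F_{2i−1} = ((5+√5)/2)^{g−1} + ((5−√5)/2)^{g−1}, where the i = 0 term uses F_{−1} = 1. -/
/-- Fibonacci numbers extended to integer index `-1` by `F_{-1} = 1`
(only indices `≥ -1` are used). -/
noncomputable def fibZ (k : ℤ) : ℝ :=
  if k = -1 then 1 else Nat.fib k.toNat

open Real

lemma sqrt5_sq : Real.sqrt 5 * Real.sqrt 5 = 5 := Real.mul_self_sqrt (by norm_num)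

lemma key1 (i : ℕ) : Real.sqrt 5 * fibZ (2 * i - 1) =
    goldenRatio * goldenConj ^ (2 * i) - goldenConj * goldenRatio ^ (2 * i) := by
  rcases Nat.eq_zero_or_pos i with h | h
  · subst h
    simp [fibZ, goldenRatio_sub_goldenConj]
  · have h1 : (2 * (i : ℤ) - 1) ≠ -1 := by omega
    have h2 : (2 * (i : ℤ) - 1).toNat = 2 * i - 1 := by omega
    obtain ⟨j, hj⟩ : ∃ j, 2 * i = j + 1 := ⟨2 * i - 1, by omega⟩
    have h2' : (2 * (i : ℤ) - 1).toNat = j := by omega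
    rw [fibZ, if_neg h1, h2', hj, Real.coe_fib_eq, pow_succ, pow_succ, mul_comm,
      div_mul_cancel₀ _ (show Real.sqrt 5 ≠ 0 by positivity)]
    linear_combination (goldenRatio ^ j - goldenConj ^ j) * goldenRatio_mul_goldenConj

theorem stmt_3 (g : ℕ) (hg : 2 ≤ g) :
    ∑ i ∈ Finset.range (g + 1), (g.choose i : ℝ) * fibZ (2 * i - 1) =
      ((5 + Real.sqrt 5) / 2) ^ (g - 1) + ((5 - Real.sqrt 5) / 2) ^ (g - 1) := by
  have h5 : Real.sqrt 5 ≠ 0 := by positivity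
  apply mul_left_cancel₀ h5
  rw [Finset.mul_sum]
  have step : ∀ i ∈ Finset.range (g + 1),
      Real.sqrt 5 * ((g.choose i : ℝ) * fibZ (2 * i - 1)) =
      goldenRatio * ((goldenConj ^ 2) ^ i * 1 ^ (g - i) * (g.choose i : ℝ))
      - goldenConj * ((goldenRatio ^ 2) ^ i * 1 ^ (g - i) * (g.choose i : ℝ)) := by
    intro i _
    rw [← pow_mul, ← pow_mul, one_pow, mul_one, mul_one]
    linear_combination (g.choose i : ℝ) * key1 i
  rw [Finset.sum_congr rfl step, Finset.sum_sub_distrib, ← Finset.mul_sum, ← Finset.mul_sum,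
    ← add_pow, ← add_pow]
  have hgs : goldenConj ^ 2 + 1 = -(Real.sqrt 5 * goldenConj) := by
    rw [goldenConj_sq]
    unfold goldenConj
    nlinarith [sqrt5_sq]
  have hcs : goldenRatio ^ 2 + 1 = Real.sqrt 5 * goldenRatio := by
    rw [goldenRatio_sq]
    unfold goldenRatio
    nlinarith [sqrt5_sq]
  have ha : (5 + Real.sqrt 5) / 2 = Real.sqrt 5 * goldenRatio := by
    unfold goldenRatio; nlinarith [sqrt5_sq]
  have hb : (5 - Real.sqrt 5) / 2 = -(Real.sqrt 5 * goldenConj) := by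
    unfold goldenConj; nlinarith [sqrt5_sq]
  rw [hgs, hcs, ha, hb]
  obtain ⟨m, rfl⟩ : ∃ m, g = m + 1 := ⟨g - 1, by omega⟩
  simp only [Nat.add_sub_cancel]
  rw [pow_succ, pow_succ]
  linear_combination (-(Real.sqrt 5 * (-(Real.sqrt 5 * goldenConj)) ^ m)
    - Real.sqrt 5 * (Real.sqrt 5 * goldenRatio) ^ m) * goldenRatio_mul_goldenConj
end

section
/- For all integers n ≥ 0 and g ≥ 2, the real number φ^n·(φ+2)^{g−1} + ψ^n·(ψ+2)^{g−1} is a nonnegative integer, where φ = (1+√5)/2 and ψ = (1−√5)/2. -/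
theorem stmt_6 (n g : ℕ) (hg : 2 ≤ g) :
    ∃ k : ℤ, 0 ≤ k ∧
      ((1 + Real.sqrt 5) / 2) ^ n * ((1 + Real.sqrt 5) / 2 + 2) ^ (g - 1) +
          ((1 - Real.sqrt 5) / 2) ^ n * ((1 - Real.sqrt 5) / 2 + 2) ^ (g - 1) = k := by
  have h5 : (0:ℝ) ≤ 5 := by norm_num
  have hs : Real.sqrt 5 * Real.sqrt 5 = 5 := Real.mul_self_sqrt h5
  set s := Real.sqrt 5 with hsdef
  have key : ∀ k : ℕ,
      ((1 + s) / 2) ^ (k+1) = (Nat.fib (k+1) : ℝ) * ((1 + s)/2) + (Nat.fib k : ℝ)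
      ∧ ((1 - s) / 2) ^ (k+1) = (Nat.fib (k+1) : ℝ) * ((1 - s)/2) + (Nat.fib k : ℝ) := by
    intro k
    induction k with
    | zero => simp
    | succ k ih =>
      obtain ⟨h1, h2⟩ := ih
      constructor
      · rw [pow_succ, h1, Nat.fib_add_two]
        push_cast
        linear_combination ((Nat.fib (k+1) : ℝ)/4) * hs
      · rw [pow_succ, h2, Nat.fib_add_two]
        push_cast
        linear_combination ((Nat.fib (k+1) : ℝ)/4) * hs
  obtain ⟨m, hm⟩ : ∃ m, g - 1 = m + 1 := ⟨g - 2, by omega⟩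
  rw [hm]
  have hφ2 : (1 + s)/2 + 2 = s * ((1 + s)/2) := by linear_combination (-1/2 : ℝ) * hs
  have hψ2 : (1 - s)/2 + 2 = (-s) * ((1 - s)/2) := by linear_combination (-1/2 : ℝ) * hs
  rw [hφ2, hψ2]
  have e1 := (key (n+m)).1
  have e2 := (key (n+m)).2
  rcases Nat.even_or_odd (m+1) with ⟨j, hj⟩ | ⟨j, hj⟩
  · -- even case
    have hev : Even (m+1) := ⟨j, hj⟩
    rw [neg_mul, hev.neg_pow]
    have hsm : s ^ (m+1) = 5 ^ j := by
      rw [hj, ← two_mul, pow_mul, sq, hs]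
    refine ⟨5^j * (Nat.fib (n+m+1) + 2 * Nat.fib (n+m)), by positivity, ?_⟩
    push_cast
    rw [mul_pow, mul_pow, hsm]
    linear_combination ((5:ℝ)^j) * e1 + ((5:ℝ)^j) * e2
  · -- odd case
    have hod : Odd (m+1) := ⟨j, hj⟩
    rw [neg_mul, hod.neg_pow]
    have hsm : s ^ (m+1) = 5 ^ j * s := by
      rw [hj, pow_succ, pow_mul, sq, hs]
    refine ⟨5^(j+1) * Nat.fib (n+m+1), by positivity, ?_⟩
    push_cast
    rw [mul_pow, mul_pow, hsm]
    linear_combination ((5:ℝ)^j * s) * e1 - ((5:ℝ)^j * s) * e2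
      + ((5:ℝ)^j * (Nat.fib (n+m+1) : ℝ)) * hs
end

section
/- For all natural numbers m and g, ∑_{i=0}^{g} C(g,i)·F_{m+2i} = ∑_{i=0}^{g} C(g,i)·2^{g−i}·F_{m+i}. -/
open Finset

lemma pascal_sum (g : ℕ) (f : ℕ → ℕ) :
    ∑ i ∈ range (g + 2), (g + 1).choose i * f i
      = ∑ i ∈ range (g + 1), g.choose i * f i
        + ∑ i ∈ range (g + 1), g.choose i * f (i + 1) := by
  rw [Finset.sum_range_succ' (fun i => (g + 1).choose i * f i),
      Finset.sum_range_succ' (fun i => g.choose i * f i)]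
  have h : ∀ i ∈ range (g + 1), (g + 1).choose (i + 1) * f (i + 1)
      = g.choose i * f (i + 1) + g.choose (i + 1) * f (i + 1) := by
    intro i _
    rw [Nat.choose_succ_succ', Nat.add_mul]
  rw [Finset.sum_congr rfl h, Finset.sum_add_distrib]
  have h2 : ∑ i ∈ range (g + 1), g.choose (i + 1) * f (i + 1)
      = ∑ i ∈ range g, g.choose (i + 1) * f (i + 1) := by
    rw [Finset.sum_range_succ, Nat.choose_succ_self, zero_mul, add_zero]
  simp [Nat.choose_zero_right, h2]
  ring

lemma key (g : ℕ) : ∀ m : ℕ,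
    ∑ i ∈ range (g + 1), g.choose i * Nat.fib (m + 2 * i) =
      ∑ i ∈ range (g + 1), g.choose i * 2 ^ (g - i) * Nat.fib (m + i) := by
  induction g with
  | zero => simp
  | succ g ih =>
    intro m
    have hL : ∑ i ∈ range (g + 2), (g + 1).choose i * Nat.fib (m + 2 * i)
        = (∑ i ∈ range (g + 1), g.choose i * Nat.fib (m + 2 * i))
          + ∑ i ∈ range (g + 1), g.choose i * Nat.fib ((m + 2) + 2 * i) := by
      rw [pascal_sum g (fun i => Nat.fib (m + 2 * i))]
      congr 1
      apply Finset.sum_congr rfl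
      intro i _
      congr 2
      ring
    have hsplit : ∑ i ∈ range (g + 1), g.choose i * Nat.fib ((m + 2) + 2 * i)
        = (∑ i ∈ range (g + 1), g.choose i * Nat.fib ((m + 1) + 2 * i))
          + ∑ i ∈ range (g + 1), g.choose i * Nat.fib (m + 2 * i) := by
      rw [← Finset.sum_add_distrib]
      apply Finset.sum_congr rfl
      intro i _
      have : (m + 2) + 2 * i = (m + 2 * i) + 2 := by ring
      rw [this, Nat.fib_add_two]
      have h1 : (m + 1) + 2 * i = (m + 2 * i) + 1 := by ring
      rw [h1, Nat.mul_add]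
      ring
    have hR : ∑ i ∈ range (g + 2), (g + 1).choose i * 2 ^ (g + 1 - i) * Nat.fib (m + i)
        = 2 * (∑ i ∈ range (g + 1), g.choose i * 2 ^ (g - i) * Nat.fib (m + i))
          + ∑ i ∈ range (g + 1), g.choose i * 2 ^ (g - i) * Nat.fib ((m + 1) + i) := by
      have := pascal_sum g (fun i => 2 ^ (g + 1 - i) * Nat.fib (m + i))
      simp only [← mul_assoc] at this
      rw [this]
      congr 1
      · rw [Finset.mul_sum]
        apply Finset.sum_congr rfl
        intro i hi
        have hi' : i ≤ g := Nat.lt_succ_iff.mp (Finset.mem_range.mp hi)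
        have : g + 1 - i = (g - i) + 1 := by omega
        rw [this, pow_succ]
        ring
      · apply Finset.sum_congr rfl
        intro i hi
        have hi' : i ≤ g := Nat.lt_succ_iff.mp (Finset.mem_range.mp hi)
        have h1 : g + 1 - (i + 1) = g - i := by omega
        have h2 : m + (i + 1) = (m + 1) + i := by ring
        rw [h1, h2]
    rw [hL, hsplit, hR, ih m, ih (m + 1)]
    ring

theorem stmt_8 (m g : ℕ) :
    ∑ i ∈ Finset.range (g + 1), g.choose i * Nat.fib (m + 2 * i) =
      ∑ i ∈ Finset.range (g + 1), g.choose i * 2 ^ (g - i) * Nat.fib (m + i) := by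
  exact key g m
end
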